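/- Let m ≥ 2 be an integer. The minimum over the standard simplex {x ∈ ℝ^N : x_i ≥ 0, Σ x_i = 1} (for any N ≥ m) of (m+1)!·Σ_{I⊆[N], |I|=m+1} Π_{i∈I} x_i + Σ_{i=1}^N x_i^{m+1} equals 1/m^m. -/

import Mathlib

open Finset

lemma two_pow_le_fact {n : ℕ} (hn : 3 ≤ n) : 2 ^ n ≤ n.factorial + 2 := by
  induction n with
  | zero => omega
  | succ k ih =>
    rcases Nat.lt_or_ge k 3 with h | h
    · interval_cases k <;> simp [Nat.factorial] <;> omega
    · have h1 := ih (by omega)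
      have h2 : 6 ≤ k.factorial := by
        calc 6 = Nat.factorial 3 := rfl
        _ ≤ k.factorial := Nat.factorial_le (by omega)
      have h3 : (k+1).factorial = (k+1) * k.factorial := rfl
      calc 2 ^ (k+1) = 2 * 2 ^ k := by ring
        _ ≤ 2 * (k.factorial + 2) := by omega
        _ ≤ (k+1).factorial + 2 := by rw [h3]; nlinarith

lemma middle_sum (m : ℕ) : ∑ i ∈ Finset.range m, Nat.choose (m+1) (i+1) + 2 = 2 ^ (m+1) := by
  have h := Nat.sum_range_choose (m+1)
  rw [Finset.sum_range_succ] at h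
  rw [Finset.sum_range_succ'] at h
  simp at h
  omega

lemma binom_bound (m : ℕ) (hm : 2 ≤ m) {a b : ℝ} (ha : 0 ≤ a) (hab : a ≤ b) :
    (a+b)^(m+1) ≤ a^(m+1) + b^(m+1) + ((m+1).factorial : ℝ) * (a * b^m) := by
  have hb : 0 ≤ b := le_trans ha hab
  rw [add_pow]
  rw [Finset.sum_range_succ, Finset.sum_range_succ']
  have e0 : a ^ 0 * b ^ (m + 1 - 0) * (Nat.choose (m+1) 0 : ℝ) = b ^ (m+1) := by simp
  have e1 : a ^ (m+1) * b ^ (m + 1 - (m+1)) * (Nat.choose (m+1) (m+1) : ℝ) = a ^ (m+1) := by simp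
  rw [e0, e1]
  have hmid : ∑ i ∈ Finset.range m, a ^ (i+1) * b ^ (m + 1 - (i+1)) * (Nat.choose (m+1) (i+1) : ℝ)
      ≤ ((m+1).factorial : ℝ) * (a * b^m) := by
    calc ∑ i ∈ Finset.range m, a ^ (i+1) * b ^ (m + 1 - (i+1)) * (Nat.choose (m+1) (i+1) : ℝ)
        ≤ ∑ i ∈ Finset.range m, (a * b ^ m) * (Nat.choose (m+1) (i+1) : ℝ) := by
          apply Finset.sum_le_sum
          intro i hi
          rw [Finset.mem_range] at hi
          have key : a ^ (i+1) * b ^ (m + 1 - (i+1)) ≤ a * b ^ m := by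
            have h1 : a ^ (i+1) * b ^ (m + 1 - (i+1)) = a * (a ^ i * b ^ (m - i)) := by
              rw [pow_succ']
              have : m + 1 - (i+1) = m - i := by omega
              rw [this]; ring
            rw [h1]
            have h2 : a ^ i * b ^ (m - i) ≤ b ^ i * b ^ (m - i) := by
              apply mul_le_mul_of_nonneg_right (pow_le_pow_left₀ ha hab i) (pow_nonneg hb _)
            have h3 : b ^ i * b ^ (m - i) = b ^ m := by
              rw [← pow_add]; congr 1; omega
            calc a * (a ^ i * b ^ (m - i)) ≤ a * (b ^ i * b ^ (m-i)) := by
                  apply mul_le_mul_of_nonneg_left h2 ha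
              _ = a * b ^ m := by rw [h3]
          apply mul_le_mul_of_nonneg_right key (Nat.cast_nonneg _)
      _ = (∑ i ∈ Finset.range m, (Nat.choose (m+1) (i+1) : ℝ)) * (a * b ^ m) := by
          rw [Finset.sum_mul]; apply Finset.sum_congr rfl; intros; ring
      _ ≤ ((m+1).factorial : ℝ) * (a * b^m) := by
          apply mul_le_mul_of_nonneg_right _ (by positivity)
          rw [← Nat.cast_sum]
          have h4 : ∑ i ∈ Finset.range m, Nat.choose (m+1) (i+1) ≤ (m+1).factorial := by
            have := middle_sum m
            have := two_pow_le_fact (n := m+1) (by omega)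
            omega
          exact_mod_cast h4
  linarith

lemma esum_eq_zero (m N : ℕ) (x : Fin N → ℝ)
    (h : #(Finset.univ.filter (fun i => x i ≠ 0)) ≤ m) :
    ∑ I ∈ (Finset.univ : Finset (Fin N)).powersetCard (m + 1), ∏ i ∈ I, x i = 0 := by
  apply Finset.sum_eq_zero
  intro I hI
  rw [Finset.mem_powersetCard] at hI
  have : ∃ i ∈ I, x i = 0 := by
    by_contra hc
    push_neg at hc
    have hsub : I ⊆ Finset.univ.filter (fun i => x i ≠ 0) := fun i hi =>
      Finset.mem_filter.2 ⟨Finset.mem_univ i, hc i hi⟩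
    have := Finset.card_le_card hsub
    omega
  obtain ⟨i, hi, hxi⟩ := this
  exact Finset.prod_eq_zero hi hxi

lemma coeff_esum (m N : ℕ) (hN : m + 1 ≤ N) (x : Fin N → ℝ) :
    ∑ I ∈ (Finset.univ : Finset (Fin N)).powersetCard (m + 1), ∏ i ∈ I, x i
      = (∏ k, (Polynomial.X + Polynomial.C (x k))).coeff (N - (m+1)) := by
  have hcard : #(Finset.univ : Finset (Fin N)) - (N - (m+1)) = m + 1 := by
    rw [Finset.card_univ, Fintype.card_fin]; omega
  rw [Finset.prod_X_add_C_coeff Finset.univ x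
    (show N - (m+1) ≤ #(Finset.univ : Finset (Fin N)) by
      rw [Finset.card_univ, Fintype.card_fin]; omega), hcard]

lemma key (m : ℕ) (hm : 2 ≤ m) :
    ∀ n : ℕ, ∀ N : ℕ, ∀ x : Fin N → ℝ, (∀ i, 0 ≤ x i) → (∑ i, x i) = 1 →
      #(Finset.univ.filter (fun i => x i ≠ 0)) ≤ n →
      1 / (m : ℝ) ^ m ≤ ((m+1).factorial : ℝ) *
          ∑ I ∈ (Finset.univ : Finset (Fin N)).powersetCard (m + 1), ∏ i ∈ I, x i
        + ∑ i, x i ^ (m + 1) := by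
  intro n
  induction n with
  | zero =>
    intro N x hx0 hx1 hcard
    exfalso
    have hempty : Finset.univ.filter (fun i => x i ≠ 0) = ∅ :=
      Finset.card_eq_zero.mp (le_antisymm hcard (Nat.zero_le _))
    have hall : ∀ i, x i = 0 := by
      intro i
      by_contra h
      have hmem : i ∈ Finset.univ.filter (fun i => x i ≠ 0) :=
        Finset.mem_filter.2 ⟨Finset.mem_univ _, h⟩
      rw [hempty] at hmem
      exact absurd hmem (Finset.notMem_empty i)
    rw [Finset.sum_congr rfl (fun i _ => hall i)] at hx1
    simp at hx1
  | succ n ih =>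
    intro N x hx0 hx1 hcard
    set t := Finset.univ.filter (fun i => x i ≠ 0) with ht
    by_cases hsm : #t ≤ m
    · -- small support case
      rw [esum_eq_zero m N x hsm, mul_zero, zero_add]
      have htsum : ∑ i ∈ t, x i = 1 := by rw [ht, Finset.sum_filter_ne_zero]; exact hx1
      have htpos : 1 ≤ #t := by
        rcases Finset.eq_empty_or_nonempty t with h | h
        · rw [h] at htsum; simp at htsum
        · exact Finset.card_pos.2 h
      have hjen := pow_sum_div_card_le_sum_pow (s := t) (f := x) (fun i _ => hx0 i) m
      rw [htsum, one_pow] at hjen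
      have h2 : ∑ i ∈ t, x i ^ (m+1) ≤ ∑ i, x i ^ (m+1) :=
        Finset.sum_le_sum_of_subset_of_nonneg (Finset.filter_subset _ _)
          (fun i _ _ => pow_nonneg (hx0 i) _)
      have h3 : (0:ℝ) < (#t : ℝ) ^ m := by positivity
      have h4 : ((#t:ℝ)) ^ m ≤ (m:ℝ) ^ m := by
        apply pow_le_pow_left₀ (by positivity)
        exact_mod_cast hsm
      have h5 : 1 / (m:ℝ)^m ≤ 1 / (#t:ℝ)^m := one_div_le_one_div_of_le h3 h4
      calc 1 / (m:ℝ)^m ≤ 1 / (#t:ℝ)^m := h5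
        _ ≤ ∑ i ∈ t, x i ^ (m+1) := hjen
        _ ≤ ∑ i, x i ^ (m+1) := h2
    · -- large support case: merge two smallest coordinates
      push_neg at hsm
      have hmN : m + 1 ≤ N := by
        have h1 : #t ≤ N := by
          have := Finset.card_le_card (Finset.filter_subset (fun i => x i ≠ 0) Finset.univ)
          simpa using this
        omega
      have htne : t.Nonempty := Finset.card_pos.1 (by omega)
      obtain ⟨i, hit, hmini⟩ := Finset.exists_min_image t x htne
      have htne2 : (t.erase i).Nonempty := by
        apply Finset.card_pos.1
        rw [Finset.card_erase_of_mem hit]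
        omega
      obtain ⟨j, hjt', hminj⟩ := Finset.exists_min_image (t.erase i) x htne2
      have hji : j ≠ i := (Finset.mem_erase.1 hjt').1
      have hjt : j ∈ t := (Finset.mem_erase.1 hjt').2
      have hxi : x i ≠ 0 := (Finset.mem_filter.1 hit).2
      have hxj : x j ≠ 0 := (Finset.mem_filter.1 hjt).2
      have ha : 0 < x i := lt_of_le_of_ne (hx0 i) (Ne.symm hxi)
      have hb : 0 < x j := lt_of_le_of_ne (hx0 j) (Ne.symm hxj)
      have hab : x i ≤ x j := hmini j hjt
      set y : Fin N → ℝ := fun k => if k = i then 0 else if k = j then x i + x j else x k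
        with hy
      have hyi : y i = 0 := by simp [hy]
      have hyj : y j = x i + x j := by simp [hy, hji]
      have hyk : ∀ k ∈ (Finset.univ.erase i).erase j, y k = x k := by
        intro k hk
        rw [Finset.mem_erase, Finset.mem_erase] at hk
        simp [hy, hk.1, hk.2.1]
      have hy0 : ∀ k, 0 ≤ y k := by
        intro k
        rw [hy]
        dsimp only
        split_ifs
        · exact le_refl 0
        · positivity
        · exact hx0 k
      have hiu : i ∈ (Finset.univ : Finset (Fin N)) := Finset.mem_univ i
      have hju : j ∈ Finset.univ.erase i := Finset.mem_erase.2 ⟨hji, Finset.mem_univ j⟩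
      have hsplit : ∀ f : Fin N → ℝ,
          ∑ k, f k = f i + (f j + ∑ k ∈ (Finset.univ.erase i).erase j, f k) := by
        intro f
        rw [← Finset.add_sum_erase _ f hiu, ← Finset.add_sum_erase _ f hju]
      have hysum : ∑ k, y k = 1 := by
        rw [hsplit y, hyi, hyj, Finset.sum_congr rfl hyk]
        rw [hsplit x] at hx1
        linarith
      have hycard : #(Finset.univ.filter (fun k => y k ≠ 0)) ≤ n := by
        have hset : Finset.univ.filter (fun k => y k ≠ 0) = t.erase i := by
          ext k
          rw [Finset.mem_filter, Finset.mem_erase, ht, Finset.mem_filter]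
          constructor
          · rintro ⟨-, hk⟩
            by_cases hki : k = i
            · rw [hki, hyi] at hk; exact absurd rfl hk
            · refine ⟨hki, Finset.mem_univ k, ?_⟩
              by_cases hkj : k = j
              · rw [hkj]; exact hxj
              · simpa [hy, hki, hkj] using hk
          · rintro ⟨hki, -, hk⟩
            refine ⟨Finset.mem_univ k, ?_⟩
            by_cases hkj : k = j
            · rw [hkj, hyj]
              have : 0 < x i + x j := by linarith
              exact ne_of_gt this
            · simpa [hy, hki, hkj] using hk
        rw [hset, Finset.card_erase_of_mem hit]
        omega
      have hIH := ih N y hy0 hysum hycard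
      set Q := ∏ k ∈ (Finset.univ.erase i).erase j,
        (Polynomial.X + Polynomial.C (x k)) with hQ
      have hPx : ∏ k, (Polynomial.X + Polynomial.C (x k))
          = (Polynomial.X + Polynomial.C (x i))
            * ((Polynomial.X + Polynomial.C (x j)) * Q) := by
        rw [← Finset.mul_prod_erase _ _ hiu, ← Finset.mul_prod_erase _ _ hju]
      have hPy : ∏ k, (Polynomial.X + Polynomial.C (y k))
          = (Polynomial.X + Polynomial.C 0)
            * ((Polynomial.X + Polynomial.C (x i + x j)) * Q) := by
        rw [← Finset.mul_prod_erase _ _ hiu, ← Finset.mul_prod_erase _ _ hju, hyi, hyj]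
        congr 2
        apply Finset.prod_congr rfl
        intro k hk
        rw [hyk k hk]
      have hring : (Polynomial.X + Polynomial.C (x i))
            * ((Polynomial.X + Polynomial.C (x j)) * Q)
          = (Polynomial.X + Polynomial.C 0)
            * ((Polynomial.X + Polynomial.C (x i + x j)) * Q)
            + Polynomial.C (x i * x j) * Q := by
        rw [map_add, map_mul, map_zero]
        ring
      have hQc : Q.coeff (N - (m+1))
          = ∑ I ∈ ((Finset.univ.erase i).erase j).powersetCard (m-1), ∏ k ∈ I, x k := by
        have hc2 : #((Finset.univ.erase i).erase j) = N - 2 := by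
          rw [Finset.card_erase_of_mem hju, Finset.card_erase_of_mem hiu,
            Finset.card_univ, Fintype.card_fin]
          omega
        have hc3 : #((Finset.univ.erase i).erase j) - (N - (m+1)) = m - 1 := by
          rw [hc2]; omega
        rw [hQ, Finset.prod_X_add_C_coeff _ x (by rw [hc2]; omega), hc3]
      have hesum : ∑ I ∈ (Finset.univ : Finset (Fin N)).powersetCard (m + 1), ∏ k ∈ I, x k
          = (∑ I ∈ (Finset.univ : Finset (Fin N)).powersetCard (m + 1), ∏ k ∈ I, y k)
            + x i * x j * Q.coeff (N - (m+1)) := by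
        rw [coeff_esum m N hmN x, coeff_esum m N hmN y, hPx, hPy, hring,
          Polynomial.coeff_add, Polynomial.coeff_C_mul]
      have hQb : x j ^ (m-1) ≤ Q.coeff (N - (m+1)) := by
        rw [hQc]
        have hcard2 : m - 1 ≤ #((t.erase i).erase j) := by
          rw [Finset.card_erase_of_mem hjt', Finset.card_erase_of_mem hit]; omega
        obtain ⟨t0, ht0sub, ht0card⟩ := Finset.exists_subset_card_eq hcard2
        have ht0mem : t0 ∈ ((Finset.univ.erase i).erase j).powersetCard (m-1) := by
          rw [Finset.mem_powersetCard]
          refine ⟨?_, ht0card⟩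
          intro k hk
          have hk' := ht0sub hk
          have h1 := Finset.mem_erase.1 hk'
          have h2 := Finset.mem_erase.1 h1.2
          exact Finset.mem_erase.2 ⟨h1.1, Finset.mem_erase.2 ⟨h2.1, Finset.mem_univ k⟩⟩
        calc x j ^ (m-1) = ∏ _k ∈ t0, x j := by rw [Finset.prod_const, ht0card]
          _ ≤ ∏ k ∈ t0, x k := by
            apply Finset.prod_le_prod (fun k _ => le_of_lt hb)
            intro k hk
            exact hminj k (Finset.mem_erase.1 (ht0sub hk)).2
          _ ≤ ∑ I ∈ ((Finset.univ.erase i).erase j).powersetCard (m-1), ∏ k ∈ I, x k :=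
            Finset.single_le_sum (f := fun I => ∏ k ∈ I, x k)
              (fun I _ => Finset.prod_nonneg (fun k _ => hx0 k)) ht0mem
      have hpow : ∑ k, x k ^ (m+1)
          = x i ^ (m+1) + (x j ^ (m+1)
            + ∑ k ∈ (Finset.univ.erase i).erase j, x k ^ (m+1)) :=
        hsplit (fun k => x k ^ (m+1))
      have hpowy : ∑ k, y k ^ (m+1)
          = (x i + x j) ^ (m+1)
            + ∑ k ∈ (Finset.univ.erase i).erase j, x k ^ (m+1) := by
        rw [hsplit (fun k => y k ^ (m+1))]
        rw [hyi, hyj, zero_pow (by omega : m + 1 ≠ 0),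
          Finset.sum_congr rfl (fun k hk => by rw [hyk k hk])]
        ring
      have hfac : (0:ℝ) ≤ ((m+1).factorial : ℝ) := Nat.cast_nonneg _
      have hbm : x j ^ m = x j ^ (m-1) * x j := by
        rw [← pow_succ]
        congr 1
        omega
      have h6 : x i * x j ^ m ≤ x i * x j * Q.coeff (N - (m+1)) := by
        have h61 : x i * x j ^ m = x i * x j * x j ^ (m-1) := by rw [hbm]; ring
        rw [h61]
        exact mul_le_mul_of_nonneg_left hQb (by positivity)
      have h7 : ((m+1).factorial : ℝ) * (x i * x j ^ m)
          ≤ ((m+1).factorial : ℝ) * (x i * x j * Q.coeff (N - (m+1))) :=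
        mul_le_mul_of_nonneg_left h6 hfac
      have hbinom := binom_bound m hm (le_of_lt ha) hab
      rw [hesum, hpow, mul_add]
      rw [hpowy] at hIH
      linarith

lemma sum_ite_fin (N m : ℕ) (hN : m ≤ N) (c : ℝ) :
    ∑ i : Fin N, (if (i:ℕ) < m then c else 0) = m * c := by
  rw [Fin.sum_univ_eq_sum_range (fun k => if k < m then c else 0) N]
  rw [← Finset.sum_filter]
  have h : Finset.filter (fun i => i < m) (Finset.range N) = Finset.range m := by
    ext k; simp [Finset.mem_range]; omega
  rw [h, Finset.sum_const, Finset.card_range, nsmul_eq_mul]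

theorem stmt_19 (m N : ℕ) (hm : 2 ≤ m) (hN : m ≤ N) :
    IsLeast {s : ℝ | ∃ x : Fin N → ℝ, (∀ i, 0 ≤ x i) ∧ (∑ i, x i) = 1 ∧
        s = (Nat.factorial (m + 1) : ℝ) *
              ∑ I ∈ (Finset.univ : Finset (Fin N)).powersetCard (m + 1), ∏ i ∈ I, x i +
            ∑ i, (x i) ^ (m + 1)}
      (1 / (m : ℝ) ^ m) := by
  have hm0 : (m:ℝ) ≠ 0 := Nat.cast_ne_zero.2 (by omega)
  have hmpos : (0:ℝ) < m := by positivity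
  constructor
  · refine ⟨fun i => if (i:ℕ) < m then (m:ℝ)⁻¹ else 0, ?_, ?_, ?_⟩
    · intro i
      dsimp only
      split_ifs
      · positivity
      · exact le_refl 0
    · have h := sum_ite_fin N m hN ((m:ℝ)⁻¹)
      rw [mul_inv_cancel₀ (Nat.cast_ne_zero.2 (by omega : m ≠ 0))] at h
      exact h
    · have hsupp : #(Finset.univ.filter
          (fun i : Fin N => (if (i:ℕ) < m then (m:ℝ)⁻¹ else 0) ≠ 0)) ≤ m := by
        have hsub : Finset.univ.filter
            (fun i : Fin N => (if (i:ℕ) < m then (m:ℝ)⁻¹ else 0) ≠ 0)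
            ⊆ Finset.univ.filter (fun i : Fin N => (i:ℕ) < m) := by
          intro k hk
          rw [Finset.mem_filter] at hk ⊢
          refine ⟨hk.1, ?_⟩
          by_contra h
          rw [if_neg h] at hk
          exact hk.2 rfl
        have hcard : #(Finset.univ.filter (fun i : Fin N => (i:ℕ) < m))
            ≤ #(Finset.range m) := by
          exact Finset.card_le_card_of_injOn (fun i => (i:ℕ))
            (fun a ha => Finset.mem_range.2 (Finset.mem_filter.1 ha).2)
            (fun a _ b _ hab => Fin.val_injective hab)
        rw [Finset.card_range] at hcard
        exact le_trans (Finset.card_le_card hsub) hcard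
      rw [esum_eq_zero m N _ hsupp, mul_zero, zero_add]
      have hps : ∑ i : Fin N, (if (i:ℕ) < m then (m:ℝ)⁻¹ else 0) ^ (m+1)
          = m * ((m:ℝ)⁻¹) ^ (m+1) := by
        rw [← sum_ite_fin N m hN (((m:ℝ)⁻¹) ^ (m+1))]
        apply Finset.sum_congr rfl
        intro k _
        split_ifs
        · rfl
        · rw [zero_pow (by omega : m + 1 ≠ 0)]
      rw [hps]
      rw [pow_succ]
      field_simp
      rw [← mul_pow, mul_one_div_cancel hm0, one_pow]
  · rintro s ⟨x, hx0, hx1, hs⟩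
    rw [hs]
    exact key m hm _ N x hx0 hx1 le_rfl
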